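/- There is no compactly supported continuous function φ: ℝ → ℂ, not identically zero, satisfying the refinement equation φ = 2 ∑_{k∈ℤ} a(k) φ(2·−k) for some finitely supported mask a: ℤ → ℂ, together with the interpolation condition φ(1/2 + k) = δ(k) for all k ∈ ℤ (where δ(0)=1 and δ(k)=0 for k≠0). -/

import Mathlib

theorem no_half_interpolating_refinable :
    ¬ ∃ (φ : ℝ → ℂ) (a : ℤ → ℂ),
        Continuous φ ∧ HasCompactSupport φ ∧ (Function.support a).Finite ∧
        (∃ x : ℝ, φ x ≠ 0) ∧
        (∀ x : ℝ, φ x = 2 * ∑ᶠ k : ℤ, a k * φ (2 * x - (k : ℝ))) ∧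
        (∀ k : ℤ, φ (1 / 2 + (k : ℝ)) = if k = 0 then 1 else 0) := by
  rintro ⟨φ, a, hc, hcs, hfa, -, href, hint⟩
  have h0 : φ (1 / 2) = 1 := by simpa using hint 0
  -- key sampled equation
  have KE : ∀ j : ℤ, φ ((j : ℝ) / 2) = 2 * ∑ᶠ k : ℤ, a k * φ ((j : ℝ) - (k : ℝ)) := by
    intro j
    have h := href ((j : ℝ) / 2)
    simpa only [show ∀ k : ℤ, 2 * ((j : ℝ) / 2) - (k : ℝ) = (j : ℝ) - (k : ℝ) from
      fun k => by ring] using h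
  -- the mask is not identically zero
  have haS : (Function.support a).Nonempty := by
    by_contra h
    rw [Set.not_nonempty_iff_eq_empty, Function.support_eq_empty_iff] at h
    have h1 := KE 1
    push_cast at h1
    rw [h0, finsum_eq_zero_of_forall_eq_zero (fun k => by simp [h])] at h1
    simp at h1
  set A : Finset ℤ := hfa.toFinset with hA
  have hAne : A.Nonempty := by
    rwa [hA, Set.Finite.toFinset_nonempty]
  set kml : ℤ := A.min' hAne with hkml
  set kpl : ℤ := A.max' hAne with hkpl
  have hmemA : ∀ k : ℤ, a k ≠ 0 → k ∈ A :=
    fun k hk => hfa.mem_toFinset.mpr (Function.mem_support.mpr hk)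
  have hakml : a kml ≠ 0 :=
    Function.mem_support.mp (hfa.mem_toFinset.mp (A.min'_mem hAne))
  have hakpl : a kpl ≠ 0 :=
    Function.mem_support.mp (hfa.mem_toFinset.mp (A.max'_mem hAne))
  -- φ vanishes far out
  obtain ⟨r, hr⟩ := hcs.isBounded.subset_ball 0
  have hout : ∀ x : ℝ, r ≤ |x| → φ x = 0 := by
    intro x hx
    apply image_eq_zero_of_notMem_tsupport
    intro hxs
    have := hr hxs
    rw [Metric.mem_ball, Real.dist_eq, sub_zero] at this
    linarith
  -- left vanishing
  set c : ℝ := |(kml : ℝ)| + |(kpl : ℝ)| + |r| + 1 with hcdef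
  have hcpos : 0 < c := by positivity
  have hvanL : ∀ n : ℕ, ∀ x : ℝ, x < (kml : ℝ) - c / 2 ^ n → φ x = 0 := by
    intro n
    induction n with
    | zero =>
      intro x hx
      apply hout
      have h1 : (kml : ℝ) - |(kml : ℝ)| ≤ 0 := by
        have := le_abs_self ((kml : ℤ) : ℝ); linarith
      have h2 : r ≤ |r| := le_abs_self r
      have h3 : -x ≤ |x| := neg_le_abs x
      have h4 : (0:ℝ) ≤ |(kpl : ℝ)| := abs_nonneg _
      simp only [pow_zero, div_one] at hx
      rw [hcdef] at hx
      linarith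
    | succ n ih =>
      intro x hx
      rw [href x]
      rw [finsum_eq_zero_of_forall_eq_zero]
      · simp
      intro k
      by_cases hak : a k = 0
      · simp [hak]
      · have hk1 : kml ≤ k := A.min'_le k (hmemA k hak)
        have hk1' : ((kml : ℤ) : ℝ) ≤ (k : ℝ) := by exact_mod_cast hk1
        have h2 : c / 2 ^ (n + 1) * 2 = c / 2 ^ n := by
          rw [pow_succ]; field_simp
        have : φ (2 * x - (k : ℝ)) = 0 := by
          apply ih
          linarith
        simp [this]
  have hL : ∀ x : ℝ, x < (kml : ℝ) → φ x = 0 := by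
    intro x hx
    obtain ⟨n, hn⟩ := exists_pow_lt_of_lt_one
      (show (0:ℝ) < ((kml : ℝ) - x) / c from div_pos (by linarith) hcpos)
      (show (1:ℝ)/2 < 1 by norm_num)
    apply hvanL n
    have h2 : ((1:ℝ)/2) ^ n = 1 / 2 ^ n := by rw [one_div, inv_pow, one_div]
    rw [h2] at hn
    have h3 : c / 2 ^ n < (kml : ℝ) - x := by
      calc c / 2 ^ n = c * (1 / 2 ^ n) := by ring
        _ < c * (((kml : ℝ) - x) / c) := by
            exact mul_lt_mul_of_pos_left hn hcpos
        _ = (kml : ℝ) - x := by field_simp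
    linarith
  -- right vanishing
  have hvanR : ∀ n : ℕ, ∀ x : ℝ, (kpl : ℝ) + c / 2 ^ n < x → φ x = 0 := by
    intro n
    induction n with
    | zero =>
      intro x hx
      apply hout
      have h1 : (0:ℝ) ≤ |(kml : ℝ)| := abs_nonneg _
      have h2 : r ≤ |r| := le_abs_self r
      have h3 : x ≤ |x| := le_abs_self x
      have h4 : -(|(kpl : ℝ)|) ≤ ((kpl:ℤ):ℝ) := neg_abs_le _
      simp only [pow_zero, div_one] at hx
      rw [hcdef] at hx
      linarith
    | succ n ih =>
      intro x hx
      rw [href x]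
      rw [finsum_eq_zero_of_forall_eq_zero]
      · simp
      intro k
      by_cases hak : a k = 0
      · simp [hak]
      · have hk1 : k ≤ kpl := A.le_max' k (hmemA k hak)
        have hk1' : (k : ℝ) ≤ ((kpl:ℤ) : ℝ) := by exact_mod_cast hk1
        have h2 : c / 2 ^ (n + 1) * 2 = c / 2 ^ n := by
          rw [pow_succ]; field_simp
        have : φ (2 * x - (k : ℝ)) = 0 := by
          apply ih
          linarith
        simp [this]
  have hR : ∀ x : ℝ, (kpl : ℝ) < x → φ x = 0 := by
    intro x hx
    obtain ⟨n, hn⟩ := exists_pow_lt_of_lt_one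
      (show (0:ℝ) < (x - (kpl : ℝ)) / c from div_pos (by linarith) hcpos)
      (show (1:ℝ)/2 < 1 by norm_num)
    apply hvanR n
    have h2 : ((1:ℝ)/2) ^ n = 1 / 2 ^ n := by rw [one_div, inv_pow, one_div]
    rw [h2] at hn
    have h3 : c / 2 ^ n < x - (kpl : ℝ) := by
      calc c / 2 ^ n = c * (1 / 2 ^ n) := by ring
        _ < c * ((x - (kpl : ℝ)) / c) := mul_lt_mul_of_pos_left hn hcpos
        _ = x - (kpl : ℝ) := by field_simp
    linarith
  -- endpoint values vanish by continuity
  have hphikml : φ ((kml:ℤ) : ℝ) = 0 := by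
    have tend : Filter.Tendsto (fun n : ℕ => ((kml:ℤ):ℝ) - 1 / ((n:ℝ) + 1))
        Filter.atTop (nhds ((kml:ℤ):ℝ)) := by
      have h := tendsto_one_div_add_atTop_nhds_zero_nat (𝕜 := ℝ)
      simpa using Filter.Tendsto.sub (tendsto_const_nhds (x := ((kml:ℤ):ℝ))) h
    have h2 := (hc.tendsto (((kml:ℤ)):ℝ)).comp tend
    have h3 : (fun n : ℕ => φ (((kml:ℤ):ℝ) - 1 / ((n:ℝ)+1))) = fun _ => (0:ℂ) := by
      funext n
      apply hL
      have : (0:ℝ) < 1 / ((n:ℝ)+1) := by positivity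
      linarith
    rw [Function.comp_def, h3] at h2
    exact tendsto_nhds_unique h2 tendsto_const_nhds
  have hphikpl : φ ((kpl:ℤ) : ℝ) = 0 := by
    have tend : Filter.Tendsto (fun n : ℕ => ((kpl:ℤ):ℝ) + 1 / ((n:ℝ) + 1))
        Filter.atTop (nhds ((kpl:ℤ):ℝ)) := by
      have h := tendsto_one_div_add_atTop_nhds_zero_nat (𝕜 := ℝ)
      simpa using Filter.Tendsto.add (tendsto_const_nhds (x := ((kpl:ℤ):ℝ))) h
    have h2 := (hc.tendsto (((kpl:ℤ)):ℝ)).comp tend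
    have h3 : (fun n : ℕ => φ (((kpl:ℤ):ℝ) + 1 / ((n:ℝ)+1))) = fun _ => (0:ℂ) := by
      funext n
      apply hR
      have : (0:ℝ) < 1 / ((n:ℝ)+1) := by positivity
      linarith
    rw [Function.comp_def, h3] at h2
    exact tendsto_nhds_unique h2 tendsto_const_nhds
  -- integer samples
  set v : ℤ → ℂ := fun j => φ ((j:ℤ) : ℝ) with hv
  have hSv : Function.support v ⊆ ↑(Finset.Icc kml kpl) := by
    intro j hj
    simp only [Function.mem_support] at hj
    simp only [Finset.coe_Icc, Set.mem_Icc]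
    constructor
    · by_contra h
      push_neg at h
      exact hj (hL _ (by exact_mod_cast h))
    · by_contra h
      push_neg at h
      exact hj (hR _ (by exact_mod_cast h))
  have hSvfin : (Function.support v).Finite :=
    Set.Finite.subset (Finset.Icc kml kpl).finite_toSet hSv
  have hSvne : (Function.support v).Nonempty := by
    by_contra h
    rw [Set.not_nonempty_iff_eq_empty, Function.support_eq_empty_iff] at h
    have hveq : ∀ j : ℤ, v j = 0 := fun j => congrFun h j
    have h1 := KE 1
    push_cast at h1
    rw [h0] at h1
    rw [finsum_eq_zero_of_forall_eq_zero (fun k => ?_)] at h1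
    · simp at h1
    · have e : ((1 - k : ℤ) : ℝ) = 1 - (k:ℝ) := by push_cast; ring
      have hz : φ (1 - (k:ℝ)) = 0 := by
        rw [← e]; exact hveq (1 - k)
      rw [hz, mul_zero]
  set Sv : Finset ℤ := hSvfin.toFinset with hSvdef
  have hSvne' : Sv.Nonempty := by rwa [hSvdef, Set.Finite.toFinset_nonempty]
  set p : ℤ := Sv.min' hSvne' with hpdef
  set q : ℤ := Sv.max' hSvne' with hqdef
  have hvp : v p ≠ 0 := Function.mem_support.mp (hSvfin.mem_toFinset.mp (Sv.min'_mem hSvne'))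
  have hvq : v q ≠ 0 := Function.mem_support.mp (hSvfin.mem_toFinset.mp (Sv.max'_mem hSvne'))
  have hbelow : ∀ j : ℤ, j < p → v j = 0 := by
    intro j hj
    by_contra h
    have hmem : j ∈ Sv := hSvfin.mem_toFinset.mpr (Function.mem_support.mpr h)
    exact absurd (Sv.min'_le j hmem) (not_le.mpr hj)
  have habove : ∀ j : ℤ, q < j → v j = 0 := by
    intro j hj
    by_contra h
    have hmem : j ∈ Sv := hSvfin.mem_toFinset.mpr (Function.mem_support.mpr h)
    exact absurd (Sv.le_max' j hmem) (not_le.mpr hj)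
  have hpq : p ≤ q := Sv.min'_le q (Sv.max'_mem hSvne')
  have hkmlp : kml < p := by
    rcases lt_or_ge kml p with h | h
    · exact h
    · exfalso
      apply hvp
      rcases eq_or_lt_of_le h with h1 | h1
      · rw [h1]; exact hphikml
      · exact hL _ (by exact_mod_cast h1)
  have hqkpl : q < kpl := by
    rcases lt_or_ge q kpl with h | h
    · exact h
    · exfalso
      apply hvq
      rcases eq_or_lt_of_le h with h1 | h1
      · rw [← h1]; exact hphikpl
      · exact hR _ (by exact_mod_cast h1)
  -- extraction lemma
  have hext : ∀ (j0 k0 : ℤ), a k0 ≠ 0 →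
      (∀ k : ℤ, a k ≠ 0 → k ≠ k0 → v (j0 - k) = 0) →
      φ ((j0 : ℝ)/2) = 2 * (a k0 * v (j0 - k0)) := by
    intro j0 k0 hk0 hzero
    rw [KE j0]
    congr 1
    rw [finsum_eq_single _ k0]
    · congr 1
      have e : ((j0 - k0 : ℤ) : ℝ) = (j0:ℝ) - (k0:ℝ) := by push_cast; ring
      rw [← e]
    · intro k hk
      by_cases hak : a k = 0
      · simp [hak]
      · have e : ((j0 - k : ℤ) : ℝ) = (j0:ℝ) - (k:ℝ) := by push_cast; ring
        rw [← e]
        exact mul_eq_zero_of_right _ (hzero k hak hk)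
  -- top equation
  have htop : kpl + q = 1 := by
    have h1 : φ (((kpl + q : ℤ):ℝ)/2) = 2 * (a kpl * v q) := by
      have h2 := hext (kpl + q) kpl hakpl (by
        intro k hak hkne
        apply habove
        have hkle : k ≤ kpl := A.le_max' k (hmemA k hak)
        omega)
      have e : kpl + q - kpl = q := by omega
      rw [e] at h2
      exact h2
    have hne : (2 : ℂ) * (a kpl * v q) ≠ 0 := by
      refine mul_ne_zero two_ne_zero (mul_ne_zero hakpl hvq)
    rcases Int.even_or_odd (kpl + q) with ⟨m, hm⟩ | ⟨m, hm⟩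
    · exfalso
      rw [hm] at h1
      have e : ((m + m : ℤ):ℝ)/2 = ((m:ℤ):ℝ) := by push_cast; ring
      rw [e] at h1
      have hvm : v m = 0 := habove m (by omega)
      exact hne ((hvm.symm.trans h1).symm)
    · rw [hm] at h1
      have e : ((2*m + 1 : ℤ):ℝ)/2 = 1/2 + (m:ℝ) := by push_cast; ring
      rw [e, hint m] at h1
      by_cases hm0 : m = 0
      · omega
      · rw [if_neg hm0] at h1
        exact absurd h1.symm hne
  -- bottom equation
  have hbot : kml + p = 1 := by
    have h1 : φ (((kml + p : ℤ):ℝ)/2) = 2 * (a kml * v p) := by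
      have h2 := hext (kml + p) kml hakml (by
        intro k hak hkne
        apply hbelow
        have hkle : kml ≤ k := A.min'_le k (hmemA k hak)
        omega)
      have e : kml + p - kml = p := by omega
      rw [e] at h2
      exact h2
    have hne : (2 : ℂ) * (a kml * v p) ≠ 0 := by
      refine mul_ne_zero two_ne_zero (mul_ne_zero hakml hvp)
    rcases Int.even_or_odd (kml + p) with ⟨m, hm⟩ | ⟨m, hm⟩
    · exfalso
      rw [hm] at h1
      have e : ((m + m : ℤ):ℝ)/2 = ((m:ℤ):ℝ) := by push_cast; ring
      rw [e] at h1
      have hvm : v m = 0 := hbelow m (by omega)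
      exact hne ((hvm.symm.trans h1).symm)
    · rw [hm] at h1
      have e : ((2*m + 1 : ℤ):ℝ)/2 = 1/2 + (m:ℝ) := by push_cast; ring
      rw [e, hint m] at h1
      by_cases hm0 : m = 0
      · omega
      · rw [if_neg hm0] at h1
        exact absurd h1.symm hne
  omega
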